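/- Let Q₂ be the kernel on {(x,z,y) ∈ ℕ³: x ≤ y} given by Q₂((x,z,y),(x',z',y')) = R(x,x') · P̄^{x←}(y,z') · (1−q) q^{y' − max(x',z')} (for max(x',z') ≤ y', x ≤ z' ≤ y, x' ≤ y'), let L₂((z₀,y₀),(x,z,y)) = (1_{x=0} + 2·1_{x>0}) (1/s₂(y)) 1_{x≤y} 1_{(z₀,y₀)=(z,y)}, and let S₂ be as defined via S₂((z₀,y₀),(z,y)) = (1−q)² (s₂(y)/s₂(y₀)) q^{y₀+y−2z} 1_{0<z≤min(y₀,y)} + ((1−q)²/(1+q)) (s₂(y)/s₂(y₀)) q^{y₀+y} 1_{z=0}. Then the intertwining L₂Q₂ = S₂L₂ holds, i.e. for all (z,y) with z ≤ y and all (x',z',y') with x' ≤ y', ∑_{x=0}^{z'} L₂((z,y),(x,z,y)) Q₂((x,z,y),(x',z',y')) = ∑_{(z'',y'')} S₂((z,y),(z'',y'')) L₂((z'',y''),(x',z',y')). -/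

import Mathlib

/-- The kernel R from the paper. -/
noncomputable def Rker (q : ℝ) (x y : ℕ) : ℝ :=
  if y = 0 then ((1 - q) / (1 + q)) * q ^ x
  else ((1 - q) / (1 + q)) * (q ^ (((x : ℤ) - y).natAbs) + q ^ (x + y))

/-- The kernel P̄^{u←}: P̄^{u←}(x,y) = (1−q) q^{x−y} if y ≥ u+1, and q^{x−u} if y = u. -/
noncomputable def Pleft (q : ℝ) (u x y : ℕ) : ℝ :=
  if y = u then q ^ (x - u) else (1 - q) * q ^ (x - y)

/-- The kernel S₂ on W = {(z,y) ∈ ℕ² : z ≤ y}, with s₂(y) = 2y+1. -/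
noncomputable def S2 (q : ℝ) (z0 y0 z y : ℕ) : ℝ :=
  if z = 0 then
    ((1 - q) ^ 2 / (1 + q)) * ((2 * (y : ℝ) + 1) / (2 * (y0 : ℝ) + 1)) * q ^ (y0 + y)
  else
    (if z ≤ min y0 y then (1 : ℝ) else 0) *
      ((1 - q) ^ 2 * ((2 * (y : ℝ) + 1) / (2 * (y0 : ℝ) + 1)) * q ^ (y0 + y - 2 * z))

/-- The kernel L₂ from W to ℕ × W. -/
noncomputable def L2 (z0 y0 x z y : ℕ) : ℝ :=
  if (z0, y0) = (z, y) ∧ x ≤ y then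
    (if x = 0 then (1 : ℝ) else 2) * (1 / (2 * (y : ℝ) + 1)) else 0

/-- The kernel Q₂:
Q₂((x,z,y),(x',z',y')) = R(x,x') P̄^{x←}(y,z') (1−q) q^{y'−max(x',z')},
vanishing when the interlacing constraints x ≤ z' ≤ y, max(x',z') ≤ y' fail. -/
noncomputable def Q2 (q : ℝ) (x z y x' z' y' : ℕ) : ℝ :=
  if x ≤ z' ∧ z' ≤ y ∧ max x' z' ≤ y' then
    Rker q x x' * Pleft q x y z' * ((1 - q) * q ^ (y' - max x' z')) else 0

/-- Evaluation of Rker at second argument 0. -/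
lemma Rker_zero (q : ℝ) (x : ℕ) : Rker q x 0 = ((1 - q) / (1 + q)) * q ^ x := by
  rw [Rker, if_pos rfl]

/-- Evaluation of Rker at a positive second argument. -/
lemma Rker_pos (q : ℝ) (x x' a b : ℕ) (hx' : x' ≠ 0)
    (ha : (((x : ℤ) - x')).natAbs = a) (hb : x + x' = b) :
    Rker q x x' = ((1 - q) / (1 + q)) * (q ^ a + q ^ b) := by
  rw [Rker, if_neg hx', ha, hb]

/-- Auxiliary weighted sum. -/
noncomputable def Fsum (q : ℝ) (x' n : ℕ) : ℝ :=
  ∑ x ∈ Finset.range (n + 1),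
    (if x = 0 then (1:ℝ) else 2) * Rker q x x' * (if x = n then 1 else (1 - q))

lemma Fsum_eq (q : ℝ) (x' n : ℕ) :
    Fsum q x' n
      = (1 - q) * (∑ x ∈ Finset.range (n + 1), (if x = 0 then (1:ℝ) else 2) * Rker q x x')
        + q * (if n = 0 then (1:ℝ) else 2) * Rker q n x' := by
  have key : (∑ x ∈ Finset.range n,
      (if x = 0 then (1:ℝ) else 2) * Rker q x x' * (if x = n then 1 else (1 - q)))
      = ∑ x ∈ Finset.range n, (1 - q) * ((if x = 0 then (1:ℝ) else 2) * Rker q x x') := by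
    apply Finset.sum_congr rfl
    intro x hx
    have hxn : x < n := Finset.mem_range.mp hx
    rw [if_neg (by omega : ¬ x = n)]
    ring
  unfold Fsum
  rw [Finset.sum_range_succ, key, if_pos rfl, Finset.mul_sum, Finset.sum_range_succ
    (f := fun x => (1 - q) * ((if x = 0 then (1:ℝ) else 2) * Rker q x x'))]
  ring

lemma Fsum_succ (q : ℝ) (x' n : ℕ) :
    Fsum q x' (n + 1) = Fsum q x' n + 2 * Rker q (n + 1) x'
      - q * (if n = 0 then (1:ℝ) else 2) * Rker q n x' := by
  rw [Fsum_eq, Fsum_eq, Finset.sum_range_succ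
    (f := fun x => (if x = 0 then (1:ℝ) else 2) * Rker q x x') (n := n + 1)]
  rw [if_neg (Nat.succ_ne_zero n)]
  ring

lemma Fsum_closed (q : ℝ) (hq0 : 0 < q) (hq1 : q < 1) (x' n : ℕ) (hn : 1 ≤ n) :
    Fsum q x' n = (1 - q) * (if x' = 0 then (1:ℝ) else 2) * q ^ (max x' n - n) := by
  have h1q : (1:ℝ) + q ≠ 0 := by nlinarith
  induction n, hn using Nat.le_induction with
  | base =>
    unfold Fsum
    rw [Finset.sum_range_succ, Finset.sum_range_succ, Finset.sum_range_zero,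
      if_pos rfl, if_pos rfl, if_neg (by omega : ¬ (1:ℕ) = 0),
      if_neg (by omega : ¬ (0:ℕ) = 1)]
    rcases Nat.lt_or_ge x' 2 with h2 | h2
    · interval_cases x'
      · rw [Rker_zero, Rker_zero, if_pos rfl,
          (by omega : max 0 1 - 1 = 0)]
        field_simp
        ring
      · rw [Rker_pos q 0 1 1 1 (by omega) (by omega) (by omega),
          Rker_pos q 1 1 0 2 (by omega) (by omega) (by omega),
          if_neg (by omega : ¬ (1:ℕ) = 0), (by omega : max 1 1 - 1 = 0)]
        field_simp
        ring
    · obtain ⟨k, rfl⟩ : ∃ k, x' = k + 2 := ⟨x' - 2, by omega⟩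
      rw [Rker_pos q 0 (k+2) (k+2) (k+2) (by omega) (by omega) (by omega),
        Rker_pos q 1 (k+2) (k+1) (k+3) (by omega) (by omega) (by omega),
        if_neg (by omega : ¬ k + 2 = 0), (by omega : max (k+2) 1 - 1 = k + 1)]
      have e1 : q ^ (k+2) = q * q ^ (k+1) := by ring
      have e2 : q ^ (k+3) = q ^ 2 * q ^ (k+1) := by ring
      rw [e1, e2]
      field_simp
      ring
  | succ n hn ih =>
    rw [Fsum_succ, ih, if_neg (by omega : ¬ n = 0)]
    rcases Nat.eq_zero_or_pos x' with hx0 | hx0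
    · subst hx0
      rw [Rker_zero, Rker_zero, if_pos rfl,
        (by omega : max 0 n - n = 0), (by omega : max 0 (n+1) - (n+1) = 0),
        pow_succ]
      ring
    · rcases Nat.lt_or_ge n x' with hlt | hge
      · -- n < x', so n + 1 ≤ x'
        obtain ⟨d, hd⟩ : ∃ d, x' = n + 1 + d := ⟨x' - (n + 1), by omega⟩
        rw [Rker_pos q (n+1) x' d (x' + n + 1) (by omega) (by omega) (by omega),
          Rker_pos q n x' (d+1) (x' + n) (by omega) (by omega) (by omega),
          if_neg (by omega : ¬ x' = 0),
          (by omega : max x' n - n = d + 1), (by omega : max x' (n+1) - (n+1) = d),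
          (by omega : x' + n + 1 = (x' + n) + 1), pow_succ, pow_succ]
        field_simp
        ring
      · -- x' ≤ n
        rw [Rker_pos q (n+1) x' ((n - x') + 1) ((n + x') + 1) (by omega) (by omega) (by omega),
          Rker_pos q n x' (n - x') (n + x') (by omega) (by omega) (by omega),
          if_neg (by omega : ¬ x' = 0),
          (by omega : max x' n - n = 0), (by omega : max x' (n+1) - (n+1) = 0),
          pow_succ, pow_succ]
        ring

/-- the intertwining L₂Q₂ = S₂L₂. -/
theorem intertwining_L2Q2_S2L2 (q : ℝ) (hq : q ∈ Set.Ioo (0:ℝ) 1)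
    (z y x' z' y' : ℕ) (hzy : z ≤ y) (hx'y' : x' ≤ y') :
    (∑ x ∈ Finset.range (z' + 1), L2 z y x z y * Q2 q x z y x' z' y')
    = ∑' p : ℕ × ℕ, S2 q z y p.1 p.2 * L2 p.1 p.2 x' z' y' := by
  obtain ⟨hq0, hq1⟩ := hq
  have h1q : (1:ℝ) + q ≠ 0 := by nlinarith
  have h2y : (2 * (y:ℝ) + 1) ≠ 0 := by positivity
  have h2y' : (2 * (y':ℝ) + 1) ≠ 0 := by positivity
  -- collapse the tsum
  have hR : (∑' p : ℕ × ℕ, S2 q z y p.1 p.2 * L2 p.1 p.2 x' z' y')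
      = S2 q z y z' y' * ((if x' = 0 then (1:ℝ) else 2) * (1 / (2 * (y':ℝ) + 1))) := by
    rw [tsum_eq_single ((z', y') : ℕ × ℕ)]
    · simp [L2, hx'y']
    · intro p hp
      have hne : ¬ ((p.1, p.2) = (z', y')) := by
        intro h; exact hp (by rw [← h])
      simp [L2, hne]
  rw [hR]
  by_cases hc : z' ≤ y ∧ max x' z' ≤ y'
  · obtain ⟨hz'y, hmy'⟩ := hc
    have hL : ∀ x ∈ Finset.range (z' + 1),
        L2 z y x z y * Q2 q x z y x' z' y'
          = (1 / (2 * (y:ℝ) + 1))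
            * ((if x = 0 then (1:ℝ) else 2) * Rker q x x' * (if x = z' then 1 else (1 - q)))
            * (q ^ (y - z') * ((1 - q) * q ^ (y' - max x' z'))) := by
      intro x hx
      have hxz : x ≤ z' := by
        have := Finset.mem_range.mp hx; omega
      have hxy : x ≤ y := le_trans hxz hz'y
      unfold L2 Q2 Pleft
      rw [if_pos (And.intro rfl hxy), if_pos (And.intro hxz (And.intro hz'y hmy'))]
      by_cases hzx : x = z'
      · subst hzx
        rw [if_pos rfl, if_pos rfl]
        ring
      · rw [if_neg (show ¬ z' = x from fun h => hzx h.symm), if_neg hzx]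
        ring
    rw [Finset.sum_congr rfl hL, ← Finset.sum_mul, ← Finset.mul_sum]
    have hF : (∑ x ∈ Finset.range (z' + 1),
        (if x = 0 then (1:ℝ) else 2) * Rker q x x' * (if x = z' then 1 else (1 - q)))
        = Fsum q x' z' := rfl
    rw [hF]
    rcases Nat.eq_zero_or_pos z' with hz0 | hz0
    · subst hz0
      have hFv : Fsum q x' 0 = Rker q 0 x' := by
        unfold Fsum
        rw [Finset.sum_range_succ, Finset.sum_range_zero]
        simp
      rw [hFv, S2, if_pos rfl]
      rcases Nat.eq_zero_or_pos x' with hx0 | hx0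
      · subst hx0
        rw [Rker_zero, if_pos rfl, (by omega : max 0 0 = 0), pow_add]
        field_simp
        ring
        simp
      · rw [Rker_pos q 0 x' x' x' (by omega) (by omega) (by omega),
          if_neg (by omega : ¬ x' = 0), (by omega : max x' 0 = x'),
          (by omega : y + y' = (y - 0) + ((y' - x') + x')), pow_add, pow_add]
        field_simp
        ring
    · rw [Fsum_closed q hq0 hq1 x' z' hz0, S2, if_neg (by omega : ¬ z' = 0),
        if_pos (by omega : z' ≤ min y y'),
        (by omega : y + y' - 2 * z' = (max x' z' - z') + ((y - z') + (y' - max x' z'))),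
        pow_add, pow_add]
      field_simp
  · push_neg at hc
    have hz0 : ¬ z' = 0 := by
      intro h; subst h
      have := hc (Nat.zero_le y)
      omega
    have hmin : ¬ z' ≤ min y y' := by
      rcases le_or_gt z' y with h | h
      · have := hc h; omega
      · omega
    rw [S2, if_neg hz0, if_neg hmin, Finset.sum_eq_zero]
    · ring
    · intro x hx
      rw [Q2, if_neg (fun h => absurd h.2.2 (not_le.2 (hc h.2.1)))]
      ring
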